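/- Let 𝒞 be a nowhere dense class of finite graphs. Then there exists a function d : ℕ → ℕ such that for every r ∈ ℕ, every graph G ∈ 𝒞, and every vertex subset A ⊆ V(G) with |A| ≥ 2, the distance profile complexity satisfies ν̂_r(G,A) ≤ |A|^{d(r)}. -/

import Mathlib

open SimpleGraph

/-- A finite simple graph: a bundled finite vertex type together with a simple graph on it. -/
structure FinGraph : Type 1 where
  V : Type
  fintypeV : Fintype V
  graph : SimpleGraph V

attribute [instance] FinGraph.fintypeV

/-- The set `S` induces a subgraph of `G` of radius at most `r`:
there is a center `c ∈ S` from which every vertex of `S` is at distance at most `r`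
inside the subgraph induced by `S`. -/
def hasRadiusLE {V : Type} (G : SimpleGraph V) (S : Set V) (r : ℕ) : Prop :=
  ∃ c : S, ∀ x : S, (G.induce S).edist c x ≤ (r : ℕ∞)

/-- `H` is a depth-`r` minor of `G`: there is a minor model of `H` in `G` with
pairwise disjoint connected branch sets of radius at most `r`. -/
def IsDepthMinor {W V : Type} (r : ℕ) (H : SimpleGraph W) (G : SimpleGraph V) : Prop :=
  ∃ I : W → Set V,
    (∀ u, hasRadiusLE G (I u) r) ∧
    (Pairwise fun u v => Disjoint (I u) (I v)) ∧
    (∀ u v, H.Adj u v → ∃ a ∈ I u, ∃ b ∈ I v, G.Adj a b)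

/-- A class of finite graphs is nowhere dense if there is `f : ℕ → ℕ` such that
`K_{f r}` is not a depth-`r` minor of any member, for every `r`. -/
def NowhereDense (C : Set FinGraph) : Prop :=
  ∃ f : ℕ → ℕ, ∀ r : ℕ, ∀ G ∈ C, ¬ IsDepthMinor r (completeGraph (Fin (f r))) G.graph

/-- `H` is (isomorphic to) a subgraph of `G`. -/
def IsSubgraphOf (H G : FinGraph) : Prop :=
  ∃ f : H.V ↪ G.V, ∀ u v, H.graph.Adj u v → G.graph.Adj (f u) (f v)

/-- A class of graphs is monotone if it is closed under taking subgraphs. -/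
def MonotoneClass (C : Set FinGraph) : Prop :=
  ∀ G ∈ C, ∀ H : FinGraph, IsSubgraphOf H G → H ∈ C

/-- The closed ball of radius `r` around `v`: `N_r[v]`. -/
def ball {V : Type} (G : SimpleGraph V) (r : ℕ) (v : V) : Set V :=
  {u | G.edist u v ≤ (r : ℕ∞)}

/-- The `r`-neighborhood complexity `ν_r(G,A)`. -/
noncomputable def nu {V : Type} (G : SimpleGraph V) (r : ℕ) (A : Set V) : ℕ :=
  {S : Set V | ∃ v : V, S = ball G r v ∩ A}.ncard

/-- The value of the `r`-distance profile of `u` at `x`: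
`dist_G(u,x)` if it is at most `r`, and `∞` otherwise. -/
noncomputable def profVal {V : Type} (G : SimpleGraph V) (r : ℕ) (u x : V) : ℕ∞ :=
  if G.edist u x ≤ (r : ℕ∞) then G.edist u x else ⊤

/-- The distance profile complexity `ν̂_r(G,A)`: the number of distinct
`r`-distance profiles `π_r[u,A] : A → {0,…,r,∞}` over `u ∈ V(G)`. -/
noncomputable def nuHat {V : Type} (G : SimpleGraph V) (r : ℕ) (A : Set V) : ℕ :=
  {f : ↥A → ℕ∞ | ∃ u : V, f = fun x : ↥A => profVal G r u ↑x}.ncard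

/-- A family `F` of subsets shatters `X` if every subset of `X` is an intersection of
`X` with a member of `F`. -/
def Shatters {U : Type} (F : Set (Set U)) (X : Set U) : Prop :=
  ∀ Y ⊆ X, ∃ S ∈ F, X ∩ S = Y

/-- The family `F` has VC-dimension at most `d`. -/
def VCDimLE {U : Type} (F : Set (Set U)) (d : ℕ) : Prop :=
  ∀ X : Set U, Shatters F X → X.ncard ≤ d

/-- `WReach_r[G,L,v]`: the set of vertices weakly `r`-reachable from `v` with respect to
the linear order `L`: vertices `u` joined to `v` by a path of length at most `r` on which
`u` is the `L`-least vertex. -/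
def WReach {V : Type} (G : SimpleGraph V) (L : LinearOrder V) (r : ℕ) (v : V) : Set V :=
  {u | ∃ p : G.Walk u v, p.IsPath ∧ p.length ≤ r ∧ ∀ x ∈ p.support, L.le u x}

/-- `B` is `r`-independent in `G`: distinct vertices of `B` are at distance more than `r`. -/
def RIndep {V : Type} (G : SimpleGraph V) (r : ℕ) (B : Set V) : Prop :=
  ∀ u ∈ B, ∀ v ∈ B, u ≠ v → (r : ℕ∞) < G.edist u v

/-- The length of a shortest `A`-avoiding path from `u` to `v`
(all vertices except possibly `v` lie outside `A`); `∞` if there is none. -/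
noncomputable def avoidDist {V : Type} (G : SimpleGraph V) (A : Set V) (u v : V) : ℕ∞ :=
  sInf {n : ℕ∞ | ∃ p : G.Walk u v, p.IsPath ∧ (∀ x ∈ p.support, x ≠ v → x ∉ A) ∧ (p.length : ℕ∞) = n}

/-- The value of the `r`-projection profile `ρ_r[u,A]` at `v`. -/
noncomputable def projProfVal {V : Type} (G : SimpleGraph V) (r : ℕ) (A : Set V) (u v : V) : ℕ∞ :=
  if avoidDist G A u v ≤ (r : ℕ∞) then avoidDist G A u v else ⊤

/-- The `r`-projection `M_r(u,A)` of `u` on `A`. -/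
def Mproj {V : Type} (G : SimpleGraph V) (r : ℕ) (A : Set V) (u : V) : Set V :=
  {v ∈ A | avoidDist G A u v ≤ (r : ℕ∞)}

/-- The projection profile complexity `μ̂_r(G,A)`: the number of distinct
`r`-projection profiles `ρ_r[u,A]` over `u ∈ V(G) ∖ A`. -/
noncomputable def muHat {V : Type} (G : SimpleGraph V) (r : ℕ) (A : Set V) : ℕ :=
  {f : ↥A → ℕ∞ | ∃ u : V, u ∉ A ∧ f = fun v : ↥A => projProfVal G r A u ↑v}.ncard

/-- `D` is a `(Z,r)`-dominator in `G`: every vertex of `Z` is at distance at most `r`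
from some vertex of `D`. -/
def IsDominator {V : Type} (G : SimpleGraph V) (r : ℕ) (Z D : Set V) : Prop :=
  ∀ z ∈ Z, ∃ d ∈ D, G.edist z d ≤ (r : ℕ∞)

/-- `D` is a minimum-size `(Z,r)`-dominator in `G`. -/
def IsMinDominator {V : Type} (G : SimpleGraph V) (r : ℕ) (Z D : Set V) : Prop :=
  IsDominator G r Z D ∧ ∀ D' : Set V, IsDominator G r Z D' → D.ncard ≤ D'.ncard

/-- `Z` is an `r`-domination core of `G`: every minimum-size `(Z,r)`-dominator
is an `r`-dominating set of `G`. -/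
def IsDomCore {V : Type} (G : SimpleGraph V) (r : ℕ) (Z : Set V) : Prop :=
  ∀ D : Set V, IsMinDominator G r Z D → IsDominator G r Set.univ D

/-- `ds_r(G,Z)`: the minimum size of a `(Z,r)`-dominator in `G`. -/
noncomputable def dsr {V : Type} (G : SimpleGraph V) (r : ℕ) (Z : Set V) : ℕ :=
  sInf {n : ℕ | ∃ D : Set V, IsDominator G r Z D ∧ D.ncard = n}

section AuxStatement2

private lemma sum_choose_le_pow' {N : ℕ} (hN : 2 ≤ N) (t : ℕ) :
    ∑ k ∈ Finset.range t, N.choose k ≤ N ^ t := by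
  induction t with
  | zero => simp
  | succ t ih =>
    rw [Finset.sum_range_succ]
    have h1 : N.choose t ≤ N ^ t := Nat.choose_le_pow N t
    have h2 : 2 * N ^ t ≤ N * N ^ t := Nat.mul_le_mul_right _ hN
    calc ∑ k ∈ Finset.range t, N.choose k + N.choose t ≤ N ^ t + N ^ t :=
          Nat.add_le_add ih h1
      _ = 2 * N ^ t := by ring
      _ ≤ N * N ^ t := h2
      _ = N ^ (t + 1) := by ring

private lemma exists_induce_walk' {V : Type} {G : SimpleGraph V} {S : Set V} {a b : V}
    (p : G.Walk a b) :
    (∀ z ∈ p.support, z ∈ S) → ∀ (ha : a ∈ S) (hb : b ∈ S),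
      ∃ q : (G.induce S).Walk ⟨a, ha⟩ ⟨b, hb⟩, q.length ≤ p.length := by
  induction p with
  | nil =>
    intro _ ha hb
    exact ⟨SimpleGraph.Walk.nil, by simp⟩
  | @cons u c d h p ih =>
    intro hp ha hb
    have hc : c ∈ S := hp c (by simp)
    obtain ⟨q, hq⟩ := ih (fun z hz => hp z (by simp [hz])) hc hb
    refine ⟨SimpleGraph.Walk.cons ?_ q, ?_⟩
    · show G.Adj u c
      exact h
    · simp only [SimpleGraph.Walk.length_cons]
      omega

private lemma exists_adj_of_walk' {V : Type} {G : SimpleGraph V} {P Q : Set V}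
    (hdisj : ∀ z, z ∈ P → z ∉ Q) {a b : V} (w : G.Walk a b) :
    a ∈ P → b ∈ Q → (∀ z ∈ w.support, z ∈ P ∪ Q) → ∃ x ∈ P, ∃ y ∈ Q, G.Adj x y := by
  induction w with
  | nil =>
    intro ha hb _
    exact absurd hb (hdisj _ ha)
  | @cons u c d h p ih =>
    intro ha hb hsupp
    have hcm : c ∈ P ∪ Q := hsupp c (by simp)
    rcases hcm with hc | hc
    · exact ih hc hb (fun z hz => hsupp z (by simp [hz]))
    · exact ⟨u, ha, c, hc, h⟩

private lemma isDepthMinor_of_shattered' {V : Type} [Fintype V] {G : SimpleGraph V}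
    {s : ℕ} {n : ℕ} (x : Fin n → V) (hinj : Function.Injective x)
    (hballs : ∀ i j : Fin n, i ≠ j →
      ∃ v : V, ∀ k : Fin n, (G.edist v (x k) ≤ (s : ℕ∞) ↔ (k = i ∨ k = j))) :
    IsDepthMinor s (completeGraph (Fin n)) G := by
  classical
  set I : Fin n → Set V := fun i =>
    {z | G.edist z (x i) ≤ (s : ℕ∞) ∧
      (∀ m, m < i → G.edist z (x i) < G.edist z (x m)) ∧
      (∀ m, i < m → G.edist z (x i) ≤ G.edist z (x m))} with hIdef
  have hxI : ∀ i, x i ∈ I i := by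
    intro i
    refine ⟨by simp [SimpleGraph.edist_self], ?_, ?_⟩
    · intro m hm
      have hne : x i ≠ x m := fun h => hm.ne' (hinj h)
      simpa [SimpleGraph.edist_self] using SimpleGraph.edist_pos_of_ne hne
    · intro m _
      simp [SimpleGraph.edist_self]
  have hdisj : ∀ i j : Fin n, i < j → ∀ z, z ∈ I i → z ∉ I j := by
    intro i j hij z hzi hzj
    exact absurd (hzi.2.2 j hij) (not_le.mpr (hzj.2.1 i hij))
  have mem_union : ∀ i j : Fin n, i < j → ∀ z : V, ∀ c : Fin n, (c = i ∨ c = j) →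
      G.edist z (x c) ≤ (s : ℕ∞) →
      (∀ m : Fin n, m ≠ i → m ≠ j → G.edist z (x c) < G.edist z (x m)) →
      z ∈ I i ∪ I j := by
    intro i j hij z c hc hcs hcert
    by_cases hij2 : G.edist z (x i) ≤ G.edist z (x j)
    · left
      have hic : G.edist z (x i) ≤ G.edist z (x c) := by
        rcases hc with rfl | rfl
        · exact le_rfl
        · exact hij2
      refine ⟨hic.trans hcs, ?_, ?_⟩
      · intro m hm
        exact lt_of_le_of_lt hic (hcert m hm.ne (hm.trans hij).ne)
      · intro m hm
        by_cases hmj : m = j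
        · subst hmj; exact hij2
        · exact (lt_of_le_of_lt hic (hcert m hm.ne' hmj)).le
    · right
      push_neg at hij2
      have hjc : G.edist z (x j) ≤ G.edist z (x c) := by
        rcases hc with rfl | rfl
        · exact hij2.le
        · exact le_rfl
      refine ⟨hjc.trans hcs, ?_, ?_⟩
      · intro m hm
        by_cases hmi : m = i
        · subst hmi; exact hij2
        · exact lt_of_le_of_lt hjc (hcert m hmi hm.ne)
      · intro m hm
        exact (lt_of_le_of_lt hjc (hcert m (hij.trans hm).ne' hm.ne')).le
  have hradius : ∀ i, hasRadiusLE G (I i) s := by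
    intro i
    refine ⟨⟨x i, hxI i⟩, ?_⟩
    rintro ⟨z, hz⟩
    have hzi : G.edist z (x i) ≤ (s : ℕ∞) := hz.1
    have hne : G.edist z (x i) ≠ ⊤ := ne_top_of_le_ne_top (WithTop.coe_ne_top) hzi
    obtain ⟨p, hp⟩ := SimpleGraph.exists_walk_of_edist_ne_top hne
    have hsupp : ∀ y ∈ p.support, y ∈ I i := by
      intro y hy
      have hab : (p.takeUntil y hy).length + (p.dropUntil y hy).length = p.length := by
        conv_rhs => rw [← p.take_spec hy]
        rw [SimpleGraph.Walk.length_append]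
      set a := (p.takeUntil y hy).length with hadef
      set b := (p.dropUntil y hy).length with hbdef
      have hza : G.edist z y ≤ (a : ℕ∞) := SimpleGraph.edist_le _
      have hyb : G.edist y (x i) ≤ (b : ℕ∞) := SimpleGraph.edist_le _
      have hE : (a : ℕ∞) + (b : ℕ∞) = G.edist z (x i) := by
        rw [← hp, ← hab]
        push_cast
        ring
      refine ⟨?_, ?_, ?_⟩
      · calc G.edist y (x i) ≤ (b : ℕ∞) := hyb
          _ ≤ (a : ℕ∞) + (b : ℕ∞) := le_add_self
          _ = G.edist z (x i) := hE
          _ ≤ (s : ℕ∞) := hzi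
      · intro m hm
        by_contra hcon
        push_neg at hcon
        have h1 : G.edist z (x i) < G.edist z (x m) := hz.2.1 m hm
        have : G.edist z (x i) < G.edist z (x i) :=
          calc G.edist z (x i) < G.edist z (x m) := h1
            _ ≤ G.edist z y + G.edist y (x m) := SimpleGraph.edist_triangle
            _ ≤ (a : ℕ∞) + G.edist y (x m) := by gcongr
            _ ≤ (a : ℕ∞) + G.edist y (x i) := by gcongr
            _ ≤ (a : ℕ∞) + (b : ℕ∞) := by gcongr
            _ = G.edist z (x i) := hE
        exact lt_irrefl _ this
      · intro m hm
        by_contra hcon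
        push_neg at hcon
        have h1 : G.edist z (x i) ≤ G.edist z (x m) := hz.2.2 m hm
        have : G.edist z (x i) < G.edist z (x i) :=
          calc G.edist z (x i) ≤ G.edist z (x m) := h1
            _ ≤ G.edist z y + G.edist y (x m) := SimpleGraph.edist_triangle
            _ ≤ (a : ℕ∞) + G.edist y (x m) := by gcongr
            _ < (a : ℕ∞) + G.edist y (x i) :=
                WithTop.add_lt_add_left (WithTop.coe_ne_top) hcon
            _ ≤ (a : ℕ∞) + (b : ℕ∞) := by gcongr
            _ = G.edist z (x i) := hE
        exact lt_irrefl _ this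
    obtain ⟨q, hq⟩ := exists_induce_walk' p hsupp hz (hxI i)
    have hle : (G.induce (I i)).edist ⟨z, hz⟩ ⟨x i, hxI i⟩ ≤ (s : ℕ∞) := by
      refine le_trans (SimpleGraph.edist_le q) ?_
      calc (q.length : ℕ∞) ≤ (p.length : ℕ∞) := by exact_mod_cast hq
        _ = G.edist z (x i) := hp
        _ ≤ (s : ℕ∞) := hzi
    rw [SimpleGraph.edist_comm]
    exact hle
  have hadj : ∀ i j : Fin n, i < j → ∃ a ∈ I i, ∃ b ∈ I j, G.Adj a b := by
    intro i j hij
    obtain ⟨v, hv⟩ := hballs i j hij.ne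
    have hvi : G.edist v (x i) ≤ (s : ℕ∞) := (hv i).mpr (Or.inl rfl)
    have hvj : G.edist v (x j) ≤ (s : ℕ∞) := (hv j).mpr (Or.inr rfl)
    have hvm : ∀ m, m ≠ i → m ≠ j → (s : ℕ∞) < G.edist v (x m) := by
      intro m h1 h2
      rcases lt_or_ge (s : ℕ∞) (G.edist v (x m)) with h | h
      · exact h
      · rcases (hv m).mp h with rfl | rfl
        · exact absurd rfl h1
        · exact absurd rfl h2
    have hpne : G.edist (x i) v ≠ ⊤ := by
      rw [SimpleGraph.edist_comm]
      exact ne_top_of_le_ne_top (WithTop.coe_ne_top) hvi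
    obtain ⟨p, hp⟩ := SimpleGraph.exists_walk_of_edist_ne_top hpne
    have hplen : (p.length : ℕ∞) ≤ (s : ℕ∞) := by
      rw [hp, SimpleGraph.edist_comm]
      exact hvi
    have hqne : G.edist v (x j) ≠ ⊤ := ne_top_of_le_ne_top (WithTop.coe_ne_top) hvj
    obtain ⟨q, hq⟩ := SimpleGraph.exists_walk_of_edist_ne_top hqne
    have hqlen : (q.length : ℕ∞) ≤ (s : ℕ∞) := by
      rw [hq]
      exact hvj
    have hsuppP : ∀ y ∈ p.support, y ∈ I i ∪ I j := by
      intro y hy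
      have hab' : (p.takeUntil y hy).length + (p.dropUntil y hy).length = p.length := by
        conv_rhs => rw [← p.take_spec hy]
        rw [SimpleGraph.Walk.length_append]
      set a := (p.takeUntil y hy).length with hadef
      set b := (p.dropUntil y hy).length with hbdef
      have hab : (a : ℕ∞) + (b : ℕ∞) ≤ (s : ℕ∞) := by
        calc (a : ℕ∞) + (b : ℕ∞) = ((a + b : ℕ) : ℕ∞) := by push_cast; ring
          _ = (p.length : ℕ∞) := by rw [hab']
          _ ≤ (s : ℕ∞) := hplen
      have hyi : G.edist y (x i) ≤ (a : ℕ∞) := by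
        rw [SimpleGraph.edist_comm]
        exact SimpleGraph.edist_le _
      have hyv : G.edist y v ≤ (b : ℕ∞) := SimpleGraph.edist_le _
      have hcert : ∀ m : Fin n, m ≠ i → m ≠ j →
          G.edist y (x i) < G.edist y (x m) := by
        intro m h1 h2
        by_contra hcon
        push_neg at hcon
        have hchain : G.edist v (x m) ≤ (s : ℕ∞) :=
          calc G.edist v (x m) ≤ G.edist v y + G.edist y (x m) := SimpleGraph.edist_triangle
            _ ≤ (b : ℕ∞) + G.edist y (x m) := by
                rw [SimpleGraph.edist_comm] at hyv
                gcongr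
            _ ≤ (b : ℕ∞) + (a : ℕ∞) := by
                refine add_le_add_right (hcon.trans hyi) _
            _ = (a : ℕ∞) + (b : ℕ∞) := by rw [add_comm]
            _ ≤ (s : ℕ∞) := hab
        exact absurd (hvm m h1 h2) (not_lt.mpr hchain)
      exact mem_union i j hij y i (Or.inl rfl)
        (hyi.trans (le_trans le_self_add hab)) hcert
    have hsuppQ : ∀ y ∈ q.support, y ∈ I i ∪ I j := by
      intro y hy
      have hab' : (q.takeUntil y hy).length + (q.dropUntil y hy).length = q.length := by
        conv_rhs => rw [← q.take_spec hy]
        rw [SimpleGraph.Walk.length_append]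
      set a := (q.takeUntil y hy).length with hadef
      set b := (q.dropUntil y hy).length with hbdef
      have hab : (a : ℕ∞) + (b : ℕ∞) ≤ (s : ℕ∞) := by
        calc (a : ℕ∞) + (b : ℕ∞) = ((a + b : ℕ) : ℕ∞) := by push_cast; ring
          _ = (q.length : ℕ∞) := by rw [hab']
          _ ≤ (s : ℕ∞) := hqlen
      have hyj : G.edist y (x j) ≤ (b : ℕ∞) := SimpleGraph.edist_le _
      have hyv : G.edist y v ≤ (a : ℕ∞) := by
        rw [SimpleGraph.edist_comm]
        exact SimpleGraph.edist_le _
      have hcert : ∀ m : Fin n, m ≠ i → m ≠ j →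
          G.edist y (x j) < G.edist y (x m) := by
        intro m h1 h2
        by_contra hcon
        push_neg at hcon
        have hchain : G.edist v (x m) ≤ (s : ℕ∞) :=
          calc G.edist v (x m) ≤ G.edist v y + G.edist y (x m) := SimpleGraph.edist_triangle
            _ ≤ (a : ℕ∞) + G.edist y (x m) := by
                rw [SimpleGraph.edist_comm] at hyv
                gcongr
            _ ≤ (a : ℕ∞) + (b : ℕ∞) := by
                refine add_le_add_right (hcon.trans hyj) _
            _ ≤ (s : ℕ∞) := hab
        exact absurd (hvm m h1 h2) (not_lt.mpr hchain)
      exact mem_union i j hij y j (Or.inr rfl)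
        (hyj.trans (le_trans le_add_self hab)) hcert
    have hsuppW : ∀ z ∈ (p.append q).support, z ∈ I i ∪ I j := by
      intro z hz
      rcases (SimpleGraph.Walk.mem_support_append_iff _ _).mp hz with h | h
      · exact hsuppP z h
      · exact hsuppQ z h
    exact exists_adj_of_walk' (hdisj i j hij) (p.append q) (hxI i) (hxI j) hsuppW
  refine ⟨I, hradius, ?_, ?_⟩
  · intro i j hne
    rcases hne.lt_or_gt with h | h
    · rw [Set.disjoint_left]
      intro z hz1 hz2
      exact hdisj i j h z hz1 hz2
    · rw [Set.disjoint_left]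
      intro z hz1 hz2
      exact hdisj j i h z hz2 hz1
  · intro i j hadj'
    have hne : i ≠ j := hadj'.ne
    rcases hne.lt_or_gt with h | h
    · exact hadj i j h
    · obtain ⟨b, hb, a, ha, hab⟩ := hadj j i h
      exact ⟨a, ha, b, hb, hab.symm⟩

open Classical in
private noncomputable def traceF' {V : Type} [Fintype V] (G : SimpleGraph V) (A : Set V)
    (s : ℕ) (u : V) : Finset V :=
  Finset.univ.filter (fun y => y ∈ A ∧ G.edist u y ≤ (s : ℕ∞))

private lemma mem_traceF' {V : Type} [Fintype V] {G : SimpleGraph V} {A : Set V}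
    {s : ℕ} {u y : V} :
    y ∈ traceF' G A s u ↔ y ∈ A ∧ G.edist u y ≤ (s : ℕ∞) := by
  classical
  simp [traceF']

open Classical in
private lemma card_image_traceF_le' {V : Type} [Fintype V] {G : SimpleGraph V} {A : Set V}
    (s t : ℕ) (hA : 2 ≤ A.ncard)
    (hminor : ¬ IsDepthMinor s (completeGraph (Fin t)) G) :
    (Finset.univ.image (traceF' G A s)).card ≤ A.ncard ^ t := by
  classical
  set A' : Finset V := (Set.toFinite A).toFinset with hA'def
  have hAcard : A.ncard = A'.card := Set.ncard_eq_toFinset_card A (Set.toFinite A)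
  have hshat : ∀ X ∈ (Finset.univ.image (traceF' G A s)).shatterer,
      X ⊆ A' ∧ X.card < t := by
    intro X hX
    rw [Finset.mem_shatterer] at hX
    have hXA : X ⊆ A' := by
      obtain ⟨u, hu, hXu⟩ := hX.exists_superset
      obtain ⟨w, -, rfl⟩ := Finset.mem_image.mp hu
      intro y hy
      have hyA := (mem_traceF'.mp (hXu hy)).1
      rw [hA'def, Set.Finite.mem_toFinset]
      exact hyA
    refine ⟨hXA, ?_⟩
    by_contra hcon
    push_neg at hcon
    set e := X.equivFin with hedef
    set x : Fin t → V := fun k => (e.symm (Fin.castLE hcon k) : V) with hxdef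
    have hinj : Function.Injective x := by
      intro k l hkl
      have h1 : e.symm (Fin.castLE hcon k) = e.symm (Fin.castLE hcon l) := Subtype.ext hkl
      have h2 := e.symm.injective h1
      exact Fin.castLE_injective hcon h2
    have hxX : ∀ k, x k ∈ X := fun k => (e.symm (Fin.castLE hcon k)).2
    have hxA : ∀ k, x k ∈ A := by
      intro k
      have := hXA (hxX k)
      rwa [hA'def, Set.Finite.mem_toFinset] at this
    have hballs : ∀ i j : Fin t, i ≠ j →
        ∃ v : V, ∀ k : Fin t, (G.edist v (x k) ≤ (s : ℕ∞) ↔ (k = i ∨ k = j)) := by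
      intro i j hne
      have hY : ({x i, x j} : Finset V) ⊆ X := by
        intro y hy
        rcases Finset.mem_insert.mp hy with rfl | hy
        · exact hxX i
        · rw [Finset.mem_singleton] at hy
          subst hy
          exact hxX j
      obtain ⟨u, hu, hXu⟩ := hX hY
      obtain ⟨w, -, rfl⟩ := Finset.mem_image.mp hu
      refine ⟨w, fun k => ?_⟩
      have hk : x k ∈ X := hxX k
      have hmem : x k ∈ X ∩ traceF' G A s w ↔ x k ∈ ({x i, x j} : Finset V) := by
        rw [hXu]
      constructor
      · intro hd
        have h1 : x k ∈ ({x i, x j} : Finset V) :=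
          hmem.mp (Finset.mem_inter.mpr ⟨hk, mem_traceF'.mpr ⟨hxA k, hd⟩⟩)
        rcases Finset.mem_insert.mp h1 with h2 | h2
        · exact Or.inl (hinj h2)
        · rw [Finset.mem_singleton] at h2
          exact Or.inr (hinj h2)
      · intro hk'
        have h1 : x k ∈ ({x i, x j} : Finset V) := by
          rcases hk' with rfl | rfl
          · exact Finset.mem_insert_self _ _
          · exact Finset.mem_insert_of_mem (Finset.mem_singleton_self _)
        have h2 := (Finset.mem_inter.mp (hmem.mpr h1)).2
        exact (mem_traceF'.mp h2).2
    exact hminor (isDepthMinor_of_shattered' x hinj hballs)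
  calc (Finset.univ.image (traceF' G A s)).card
      ≤ (Finset.univ.image (traceF' G A s)).shatterer.card :=
        Finset.card_le_card_shatterer _
    _ ≤ ((Finset.range t).biUnion (fun k => Finset.powersetCard k A')).card := by
        refine Finset.card_le_card ?_
        intro X hX
        obtain ⟨h1, h2⟩ := hshat X hX
        exact Finset.mem_biUnion.mpr
          ⟨X.card, Finset.mem_range.mpr h2, Finset.mem_powersetCard.mpr ⟨h1, rfl⟩⟩
    _ ≤ ∑ k ∈ Finset.range t, (Finset.powersetCard k A').card := Finset.card_biUnion_le
    _ = ∑ k ∈ Finset.range t, A'.card.choose k := by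
        refine Finset.sum_congr rfl ?_
        intro k _
        exact Finset.card_powersetCard k A'
    _ ≤ A'.card ^ t := sum_choose_le_pow' (by rw [← hAcard]; exact hA) t
    _ = A.ncard ^ t := by rw [hAcard]

private lemma ncard_range_le_of_factor' {α : Type} {β γ : Type*} [Fintype α]
    (f : α → β) (g : α → γ) (h : ∀ a a', g a = g a' → f a = f a') :
    (Set.range f).ncard ≤ (Set.range g).ncard := by
  classical
  by_cases hα : Nonempty α
  · obtain ⟨a0⟩ := hα
    set F : γ → β := fun c => if hc : ∃ a, g a = c then f hc.choose else f a0 with hF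
    have hrange : Set.range f = F '' Set.range g := by
      ext b
      constructor
      · rintro ⟨a, rfl⟩
        refine ⟨g a, ⟨a, rfl⟩, ?_⟩
        have hc : ∃ a', g a' = g a := ⟨a, rfl⟩
        simp only [hF, dif_pos hc]
        exact h _ _ hc.choose_spec
      · rintro ⟨c, ⟨a, rfl⟩, rfl⟩
        refine ⟨a, ?_⟩
        have hc : ∃ a', g a' = g a := ⟨a, rfl⟩
        simp only [hF, dif_pos hc]
        exact (h _ _ hc.choose_spec).symm
    rw [hrange]
    exact Set.ncard_image_le (Set.finite_range g)
  · have h1 : Set.range f = ∅ := by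
      rw [Set.range_eq_empty_iff]
      exact not_nonempty_iff.mp hα
    simp [h1]

end AuxStatement2

/-- Nowhere dense classes have polynomial distance profile complexity. -/
theorem distance_profile_complexity_poly_of_nowhereDense
    (C : Set FinGraph) (hC : NowhereDense C) :
    ∃ d : ℕ → ℕ, ∀ (r : ℕ), ∀ G ∈ C, ∀ A : Set G.V, 2 ≤ A.ncard →
      nuHat G.graph r A ≤ A.ncard ^ d r := by
  classical
  obtain ⟨f, hf⟩ := hC
  refine ⟨fun r => ∑ i ∈ Finset.range (r + 1), f i, ?_⟩
  intro r G hG A hA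
  set prof : G.V → (↥A → ℕ∞) := fun u x => profVal G.graph r u ↑x with hprofdef
  have hnu : nuHat G.graph r A = (Set.range prof).ncard := by
    unfold nuHat
    congr 1
    ext g
    constructor
    · rintro ⟨u, hu⟩
      exact ⟨u, hu.symm⟩
    · rintro ⟨u, hu⟩
      exact ⟨u, hu.symm⟩
  set Φ : G.V → (Fin (r + 1) → Finset G.V) :=
    fun u k => traceF' G.graph A (k : ℕ) u with hPhidef
  have key : ∀ w w' : G.V, Φ w = Φ w' → ∀ (y : G.V), y ∈ A → ∀ k : ℕ, k ≤ r →
      G.graph.edist w y ≤ (k : ℕ∞) → G.graph.edist w' y ≤ (k : ℕ∞) := by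
    intro w w' hww y hyA k hk hd
    have hk' : k < r + 1 := by omega
    have h1 : y ∈ traceF' G.graph A k w := mem_traceF'.mpr ⟨hyA, hd⟩
    have h2 := congrFun hww (⟨k, hk'⟩ : Fin (r + 1))
    have h3 : y ∈ traceF' G.graph A k w' := by
      have : Φ w (⟨k, hk'⟩ : Fin (r + 1)) = traceF' G.graph A k w := rfl
      rw [← this, h2] at h1
      exact h1
    exact (mem_traceF'.mp h3).2
  have hfactor : ∀ u u', Φ u = Φ u' → prof u = prof u' := by
    intro u u' h
    funext yy
    rcases yy with ⟨y, hy⟩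
    show profVal G.graph r u y = profVal G.graph r u' y
    by_cases h1 : G.graph.edist u y ≤ (r : ℕ∞)
    · have hne : G.graph.edist u y ≠ ⊤ := ne_top_of_le_ne_top (WithTop.coe_ne_top) h1
      set k := (G.graph.edist u y).toNat with hkdef
      have hk : (k : ℕ∞) = G.graph.edist u y := ENat.coe_toNat hne
      have hkr : k ≤ r := by
        have h2 : (k : ℕ∞) ≤ (r : ℕ∞) := hk.le.trans h1
        exact_mod_cast h2
      have h2 : G.graph.edist u' y ≤ (k : ℕ∞) := key u u' h y hy k hkr hk.ge
      have hne' : G.graph.edist u' y ≠ ⊤ := ne_top_of_le_ne_top (WithTop.coe_ne_top) h2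
      set k' := (G.graph.edist u' y).toNat with hk'def
      have hk' : (k' : ℕ∞) = G.graph.edist u' y := ENat.coe_toNat hne'
      have hk'r : k' ≤ r := by
        have h3 : (k' : ℕ∞) ≤ (r : ℕ∞) := hk'.le.trans (h2.trans (by exact_mod_cast hkr))
        exact_mod_cast h3
      have h3 : G.graph.edist u y ≤ (k' : ℕ∞) := key u' u h.symm y hy k' hk'r hk'.ge
      have heq : G.graph.edist u y = G.graph.edist u' y :=
        le_antisymm (h3.trans hk'.le) (h2.trans hk.le)
      have h1' : G.graph.edist u' y ≤ (r : ℕ∞) := heq ▸ h1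
      simp only [profVal, if_pos h1, if_pos h1', heq]
    · have h1' : ¬ G.graph.edist u' y ≤ (r : ℕ∞) := by
        intro hcon
        exact h1 (key u' u h.symm y hy r le_rfl hcon)
      simp only [profVal, if_neg h1, if_neg h1']
  have hstep1 : nuHat G.graph r A ≤ (Set.range Φ).ncard := by
    rw [hnu]
    exact ncard_range_le_of_factor' prof Φ hfactor
  have hstep2 : (Set.range Φ).ncard = (Finset.univ.image Φ).card := by
    rw [← Set.ncard_coe_finset]
    congr 1
    rw [Finset.coe_image, Finset.coe_univ, Set.image_univ]
  have hstep3 : Finset.univ.image Φ ⊆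
      Fintype.piFinset (fun k : Fin (r + 1) =>
        Finset.univ.image (traceF' G.graph A (k : ℕ))) := by
    intro t ht
    obtain ⟨u, -, rfl⟩ := Finset.mem_image.mp ht
    rw [Fintype.mem_piFinset]
    exact fun k => Finset.mem_image.mpr ⟨u, Finset.mem_univ u, rfl⟩
  have hstep4 : (Finset.univ.image Φ).card ≤
      ∏ k : Fin (r + 1), (Finset.univ.image (traceF' G.graph A (k : ℕ))).card := by
    have h4 := Finset.card_le_card hstep3
    rwa [Fintype.card_piFinset] at h4
  have hstep5 : ∀ k : Fin (r + 1),
      (Finset.univ.image (traceF' G.graph A (k : ℕ))).card ≤ A.ncard ^ (f (k : ℕ)) := by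
    intro k
    exact card_image_traceF_le' (k : ℕ) (f (k : ℕ)) hA (hf (k : ℕ) G hG)
  calc nuHat G.graph r A ≤ (Set.range Φ).ncard := hstep1
    _ = (Finset.univ.image Φ).card := hstep2
    _ ≤ ∏ k : Fin (r + 1), (Finset.univ.image (traceF' G.graph A (k : ℕ))).card := hstep4
    _ ≤ ∏ k : Fin (r + 1), A.ncard ^ (f (k : ℕ)) := Finset.prod_le_prod' (fun i _ => hstep5 i)
    _ = A.ncard ^ (∑ k : Fin (r + 1), f (k : ℕ)) :=
        Finset.prod_pow_eq_pow_sum Finset.univ (fun k : Fin (r + 1) => f (k : ℕ)) A.ncard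
    _ = A.ncard ^ (∑ i ∈ Finset.range (r + 1), f i) := by
        rw [Fin.sum_univ_eq_sum_range]
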